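/- Let p ≥ 2 and n ≥ 1, and let K_{p,n}(t) = 1 + tⁿ · (p−1)/(1 − (p−1)(t + t² + ⋯ + tⁿ)) = (1 − (p−1)(t + ⋯ + t^{n−1}))/(1 − (p−1)(t + ⋯ + tⁿ)) be the rational generating function for the cell counts of the CW-complex |K(π,n)| with π of order p. Then evaluating at t = −1 gives K_{p,n}(−1) = p^{(−1)ⁿ}, i.e., K_{p,n}(−1) = p if n is even and K_{p,n}(−1) = 1/p if n is odd. -/

import Mathlib

lemma sum_neg_one_pow_Icc (n : ℕ) :
    ∑ i ∈ Finset.Icc 1 n, (-1 : ℚ) ^ i = if Even n then 0 else -1 := by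
  induction n with
  | zero => simp
  | succ k ih =>
    rw [Finset.sum_Icc_succ_top (by omega : 1 ≤ k + 1), ih]
    rcases Nat.even_or_odd k with h | h
    · rw [if_pos h, if_neg (by simp [Nat.even_add_one, Nat.not_even_iff_odd, Nat.odd_add_one, h]),
        pow_succ, h.neg_one_pow]
      ring
    · rw [if_neg (Nat.not_even_iff_odd.2 h), if_pos (Nat.even_add_one.2 (Nat.not_even_iff_odd.2 h)),
        pow_succ, h.neg_one_pow]
      ring

/-- Evaluation at `t = −1` of the rational generating function
`K_{p,n}(t) = (1 − (p−1)(t + ⋯ + t^{n−1}))/(1 − (p−1)(t + ⋯ + tⁿ))` for the cell counts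
of the canonical `Θ_n`-set model of `K(π,n)` with `π` of order `p`: the denominator is
nonzero at `t = −1` and the value is `p^{(−1)ⁿ}`, i.e. `p` when `n` is even and `1/p`
when `n` is odd (the virtual Euler–Poincaré characteristic). -/
theorem stmt_18 (p n : ℕ) (hp : 2 ≤ p) (hn : 1 ≤ n) :
    (1 - ((p : ℚ) - 1) * ∑ i ∈ Finset.Icc 1 n, (-1 : ℚ) ^ i) ≠ 0 ∧
    (1 - ((p : ℚ) - 1) * ∑ i ∈ Finset.Icc 1 (n - 1), (-1 : ℚ) ^ i) /
        (1 - ((p : ℚ) - 1) * ∑ i ∈ Finset.Icc 1 n, (-1 : ℚ) ^ i) =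
      if Even n then (p : ℚ) else (p : ℚ)⁻¹ := by
  have hp' : (1 : ℚ) < (p : ℚ) := by exact_mod_cast hp.trans_lt' one_lt_two |>.le.lt_of_ne' (by exact_mod_cast (by omega : p ≠ 1))
  have hp0 : (p : ℚ) ≠ 0 := by positivity
  rw [sum_neg_one_pow_Icc, sum_neg_one_pow_Icc]
  rcases Nat.even_or_odd n with h | h
  · have h1 : ¬ Even (n - 1) := by
      rw [Nat.not_even_iff_odd]; exact Nat.Even.sub_odd hn h odd_one
    simp only [h, h1, if_true, if_false]
    refine ⟨by norm_num, ?_⟩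
    field_simp
    ring
  · have h1 : Even (n - 1) := by
      rcases h with ⟨k, hk⟩; exact ⟨k, by omega⟩
    simp only [Nat.not_even_iff_odd.2 h, h1, if_true, if_false]
    have : (1 : ℚ) - ((p:ℚ) - 1) * (-1) = p := by ring
    rw [this]
    refine ⟨hp0, by simp⟩
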